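/- Let V be a finite vertex set with |V| = n ≥ 2 and a distinguished source s ∈ V. Let the edge set be E ∪ Ê, where E is a finite set of directed edges with nonnegative lengths ℓ_e ≥ 0, and Ê = {e_v : v ∈ V∖{s}} consists of one edge e_v from s to v of length ℓ_{e_v} = d_v > 0 for each v ≠ s. Let B be the incidence matrix, let F = ∑_{v≠s} d_v, let α > 0, F* = (1−α)F, let m > 0 satisfy |E| + |Ê| ≤ 2m, let p ≥ 2 be an integer, and let δ_e ≥ 0 for e ∈ E. Suppose: (i) f ∈ ℝ^{E∪Ê} is entrywise nonnegative, routes the demand d given by d_s = n−1 and d_v = −1 for v ≠ s, and satisfies f_e + δ_e > 0 for e ∈ E and f_e > 0 for e ∈ Ê; (ii) ℓ^⊤f > (1+5α)F; (iii) for every v ≠ s there exists an entrywise nonnegative h_v ∈ ℝ^{E∪Ê} routing the demand χ_s − χ_v (one unit from s to v) with ℓ^⊤h_v ≤ d_v. Define w ∈ ℝ^{E∪Ê} by w_e = 1/(f_e+δ_e) for e ∈ E and w_e = W_p(f_e) for e ∈ Ê, and g = (10m/(ℓ^⊤f − F*))·ℓ − w. Then there exists a nonzero circulation Δ ∈ ℝ^{E∪Ê}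 (B^⊤Δ = 0) with g^⊤Δ ≤ −‖WΔ‖₁, i.e. g^⊤Δ/‖WΔ‖₁ ≤ −1. -/

import Mathlib

open Sum

/-- The weight function `W_p`: `W_p(x) = x^{-(p+1)}` for `x ≤ 1`, `W_p(x) = 1/x` for `x ≥ 1`. -/
noncomputable def barrierW (p : ℕ) (x : ℝ) : ℝ :=
  if x ≤ 1 then x ^ (-(p : ℤ) - 1) else 1 / x

/-- `f` routes the demand `d` in the directed graph given by `tail`, `head`:
for every vertex `u`, the net outflow of `f` at `u` equals `d u`. -/
def Routes {Edge V : Type*} [Fintype Edge] [DecidableEq V]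
    (tail head : Edge → V) (f : Edge → ℝ) (d : V → ℝ) : Prop :=
  ∀ u : V, ((∑ e, if tail e = u then f e else 0) - ∑ e, if head e = u then f e else 0) = d u

/-- Lemma `value`: in the augmented graph (original edges `E` plus one edge
`e_v = (s, v)` of length `d_v` for each `v ≠ s`), if `f` routes the SSSP demand and has cost
`ℓᵀf > (1+5α)F`, and each vertex `v ≠ s` can be reached from `s` by a nonnegative unit flow of
cost at most `d_v`, then there is a nonzero circulation `Δ` with `gᵀΔ ≤ -‖WΔ‖₁`. -/
theorem exists_good_cycle_when_cost_large {V E : Type*} [Fintype V] [DecidableEq V] [Fintype E]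
    (s : V) (hn : 2 ≤ Fintype.card V)
    (tailE headE : E → V) (ℓE : E → ℝ) (hℓE : ∀ e, 0 ≤ ℓE e)
    (dv : {v : V // v ≠ s} → ℝ) (hdv : ∀ v, 0 < dv v)
    (p : ℕ) (hp : 2 ≤ p)
    (δ : E → ℝ) (hδ : ∀ e, 0 ≤ δ e)
    (α : ℝ) (hα : 0 < α)
    (m : ℝ) (hm : 0 < m)
    (hcard : (Fintype.card E : ℝ) + (Fintype.card {v : V // v ≠ s} : ℝ) ≤ 2 * m)
    -- the augmented graph: tail, head and lengths on `E ⊕ Ê`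
    (tail head : E ⊕ {v : V // v ≠ s} → V) (ℓ : E ⊕ {v : V // v ≠ s} → ℝ)
    (htail : tail = Sum.elim tailE fun _ => s)
    (hhead : head = Sum.elim headE Subtype.val)
    (hℓ : ℓ = Sum.elim ℓE dv)
    -- (i) the flow f
    (f : E ⊕ {v : V // v ≠ s} → ℝ) (hfnn : ∀ e, 0 ≤ f e)
    (hroutes : Routes tail head f
      (fun u => if u = s then (Fintype.card V : ℝ) - 1 else -1))
    (hf2 : ∀ e : E, 0 < f (inl e) + δ e)
    (hf3 : ∀ e : {v : V // v ≠ s}, 0 < f (inr e))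
    -- (ii) large cost
    (hcost : (1 + 5 * α) * (∑ v, dv v) < ∑ e, ℓ e * f e)
    -- (iii) cheap unit flows from s to each v
    (hpath : ∀ v : {v : V // v ≠ s}, ∃ h : E ⊕ {v : V // v ≠ s} → ℝ,
      (∀ e, 0 ≤ h e) ∧
      Routes tail head h
        (fun u => (if u = s then (1 : ℝ) else 0) - if u = (v : V) then 1 else 0) ∧
      ∑ e, ℓ e * h e ≤ dv v) :
    -- conclusion: a nonzero circulation of quality at most -1 w.r.t. the weights w and gradient g
    ∃ Δ : E ⊕ {v : V // v ≠ s} → ℝ, Δ ≠ 0 ∧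
      Routes tail head Δ (fun _ => 0) ∧
      (∑ e, (10 * m / (∑ e', ℓ e' * f e' - (1 - α) * ∑ v, dv v) * ℓ e -
          Sum.elim (fun e' => 1 / (f (inl e') + δ e'))
            (fun e' => barrierW p (f (inr e'))) e) * Δ e)
        ≤ -(∑ e, Sum.elim (fun e' => 1 / (f (inl e') + δ e'))
            (fun e' => barrierW p (f (inr e'))) e * |Δ e|) := by
  classical
  subst htail hhead hℓ
  set F : ℝ := ∑ v, dv v with hFdef
  set L : ℝ := ∑ e, Sum.elim ℓE dv e * f e with hLdef
  set w : E ⊕ {v : V // v ≠ s} → ℝ :=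
    Sum.elim (fun e' => 1 / (f (inl e') + δ e')) (fun e' => barrierW p (f (inr e'))) with hwdef
  set Δ : E ⊕ {v : V // v ≠ s} → ℝ :=
    Sum.elim (fun e => -(f (inl e))) (fun v => 1 - f (inr v)) with hΔdef
  have hcardnat : Fintype.card {v : V // v ≠ s} = Fintype.card V - 1 := by
    simp [Fintype.card_subtype_compl, Fintype.card_subtype_eq]
  have hcardSb : (Fintype.card {v : V // v ≠ s} : ℝ) = (Fintype.card V : ℝ) - 1 := by
    rw [hcardnat, Nat.cast_sub (by omega)]; simp
  have hFpos : 0 < F := by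
    apply Finset.sum_pos (fun v _ => hdv v)
    have : Nonempty {v : V // v ≠ s} := Fintype.card_pos_iff.mp (by omega)
    exact Finset.univ_nonempty
  have hD : 0 < L - (1 - α) * F := by nlinarith [hcost, mul_pos hα hFpos]
  have hlΔ : ∑ e, Sum.elim ℓE dv e * Δ e = F - L := by
    simp only [hLdef, hFdef, hΔdef, Fintype.sum_sum_type, Sum.elim_inl, Sum.elim_inr,
      mul_sub, mul_neg, mul_one, Finset.sum_sub_distrib, Finset.sum_neg_distrib]
    ring
  have hΔne : Δ ≠ 0 := by
    intro h
    rw [h] at hlΔ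
    simp at hlΔ
    nlinarith [hcost, mul_pos hα hFpos]
  refine ⟨Δ, hΔne, ?_, ?_⟩
  · -- circulation
    intro u
    have hdec : ∀ e, Δ e = Sum.elim (fun _ : E => (0:ℝ)) (fun _ : {v : V // v ≠ s} => 1) e - f e := by
      intro e; cases e <;> simp [hΔdef]
    have split : ∀ (tl : E ⊕ {v : V // v ≠ s} → V),
        (∑ e, if tl e = u then Δ e else 0) =
        (∑ e, if tl e = u then Sum.elim (fun _ : E => (0:ℝ)) (fun _ : {v : V // v ≠ s} => 1) e else 0)
          - ∑ e, if tl e = u then f e else 0 := by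
      intro tl
      rw [← Finset.sum_sub_distrib]
      refine Finset.sum_congr rfl fun e _ => ?_
      rw [hdec e]; split_ifs <;> ring
    rw [split, split]
    have htl : (∑ e, if Sum.elim tailE (fun _ : {v : V // v ≠ s} => s) e = u then
        Sum.elim (fun _ : E => (0:ℝ)) (fun _ : {v : V // v ≠ s} => 1) e else 0)
        = if u = s then (Fintype.card V : ℝ) - 1 else 0 := by
      rw [Fintype.sum_sum_type]
      simp only [Sum.elim_inl, Sum.elim_inr, ite_self, Finset.sum_const_zero, zero_add]
      by_cases hu : u = s
      · simp [hu, ← hcardSb, Finset.card_univ]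
      · simp [hu, Ne.symm hu]
        exact Finset.sum_eq_zero fun _ _ => ite_self _
    have hhd : (∑ e, if Sum.elim headE Subtype.val e = u then
        Sum.elim (fun _ : E => (0:ℝ)) (fun _ : {v : V // v ≠ s} => 1) e else 0)
        = if u = s then 0 else (1:ℝ) := by
      rw [Fintype.sum_sum_type]
      simp only [Sum.elim_inl, Sum.elim_inr, ite_self, Finset.sum_const_zero, zero_add]
      by_cases hu : u = s
      · rw [if_pos hu]
        refine (congrArg (· + _) (Finset.sum_eq_zero fun _ _ => ite_self _)).trans ?_
        rw [zero_add]
        apply Finset.sum_eq_zero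
        intro v _
        refine if_neg ?_
        rw [hu]; exact v.2
      · rw [if_neg hu]
        have hiff : ∀ v : {v : V // v ≠ s}, ((v : V) = u) = (v = (⟨u, hu⟩ : {v : V // v ≠ s})) := by
          intro v; simp [Subtype.ext_iff]
        simp_rw [hiff]
        simp
        exact Finset.sum_eq_zero fun _ _ => ite_self _
    rw [htl, hhd]
    have h0 : (fun _ : V => (0:ℝ)) u = 0 := rfl
    rw [h0]
    have h1 := hroutes u
    simp only at h1
    split_ifs at h1 ⊢ <;> linarith
  · -- quality bound
    set c : ℝ := 10 * m / (L - (1 - α) * F) with hcdef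
    have hexp : ∑ e, (c * Sum.elim ℓE dv e - w e) * Δ e
        = c * (F - L) - ∑ e, w e * Δ e := by
      rw [← hlΔ, Finset.mul_sum, ← Finset.sum_sub_distrib]
      exact Finset.sum_congr rfl fun e _ => by ring
    have hper : ∀ e, w e * |Δ e| - w e * Δ e ≤ 2 := by
      intro e
      cases e with
      | inl a =>
        simp only [hwdef, hΔdef, Sum.elim_inl, abs_neg, abs_of_nonneg (hfnn (inl a))]
        have h1 : 0 < f (inl a) + δ a := hf2 a
        have h2 : 1 / (f (inl a) + δ a) * f (inl a) ≤ 1 := by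
          rw [div_mul_eq_mul_div, one_mul, div_le_one h1]
          linarith [hδ a]
        nlinarith [h2]
      | inr v =>
        simp only [hwdef, hΔdef, Sum.elim_inr]
        have hx : 0 < f (inr v) := hf3 v
        by_cases h1 : f (inr v) ≤ 1
        · rw [abs_of_nonneg (by linarith), sub_self]
          norm_num
        · push_neg at h1
          rw [abs_of_nonpos (by linarith), barrierW, if_neg (not_le.mpr h1)]
          have h2 : 1 / f (inr v) * (f (inr v) - 1) ≤ 1 := by
            rw [div_mul_eq_mul_div, one_mul, div_le_one hx]
            linarith
          have h3 : -(1 - f (inr v)) = f (inr v) - 1 := by ring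
          rw [h3]
          nlinarith [h2]
    have hsum2 : ∑ e, (w e * |Δ e| - w e * Δ e) ≤ 4 * m := by
      calc ∑ e, (w e * |Δ e| - w e * Δ e) ≤ ∑ _e : E ⊕ {v : V // v ≠ s}, (2:ℝ) :=
            Finset.sum_le_sum fun e _ => hper e
        _ = (Fintype.card (E ⊕ {v : V // v ≠ s}) : ℝ) * 2 := by
            rw [Finset.sum_const, Finset.card_univ]; simp [mul_comm]
        _ ≤ 4 * m := by
            rw [Fintype.card_sum]
            push_cast
            linarith [hcard]
    have h3 : c * (F - L) ≤ -(4 * m) := by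
      rw [hcdef, div_mul_eq_mul_div, div_le_iff₀ hD]
      nlinarith [hcost, mul_pos hm (mul_pos hα hFpos),
        mul_pos hm (show (0:ℝ) < L - (1 + 5 * α) * F by linarith [hcost])]
    rw [Finset.sum_sub_distrib] at hsum2
    rw [hexp]
    linarith
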